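/- Let G be a finitely generated group and let H be a finitely presented group, i.e., H is isomorphic to the quotient of a free group on finitely many generators by the normal closure of a finite set of relators. If G ⊑ H, then there exists a surjective group homomorphism from H onto G. -/

import Mathlib

/-- `G` preforms `H` (written `G ⊑ H` in the paper). -/
def Preforms (G : Type*) (H : Type*) [Group G] [Group H] : Prop :=
  ∃ (k : ℕ) (t : Fin k → H), Subgroup.closure (Set.range t) = ⊤ ∧
    ∀ R : ℕ, ∃ s : Fin k → G, Subgroup.closure (Set.range s) = ⊤ ∧
      ∀ w : FreeGroup (Fin k), (FreeGroup.toWord w).length ≤ R →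
        (FreeGroup.lift s w = 1 ↔ FreeGroup.lift t w = 1)

/-- A group is finitely presented if it is the quotient of a finitely generated free
group by the normal closure of a finite set of relators. -/
def IsFinitelyPresented (K : Type*) [Group K] : Prop :=
  ∃ (n : ℕ) (Rel : Finset (FreeGroup (Fin n))),
    Nonempty (K ≃* FreeGroup (Fin n) ⧸ Subgroup.normalClosure (Rel : Set (FreeGroup (Fin n))))

/-- If `G ⊑ H` and `H` is finitely presented, then `G` is a quotient of `H`. -/
theorem quotient_of_preforms_finitely_presented
    (G H : Type*) [Group G] [Group H] (hG : Group.FG G)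
    (hH : IsFinitelyPresented H) (hpre : Preforms G H) :
    ∃ f : H →* G, Function.Surjective f := by
  classical
  obtain ⟨k, t, htgen, hR⟩ := hpre
  obtain ⟨n, Rel, ⟨e⟩⟩ := hH
  set φ : FreeGroup (Fin k) →* H := FreeGroup.lift t with hφ
  have hφsurj : Function.Surjective φ := by
    rw [← MonoidHom.range_eq_top, FreeGroup.range_lift_eq_closure, htgen]
  set ψ : FreeGroup (Fin n) →* H :=
    e.symm.toMonoidHom.comp (QuotientGroup.mk' _) with hψ
  have hψsurj : Function.Surjective ψ :=
    e.symm.surjective.comp (QuotientGroup.mk'_surjective _)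
  have hker_ψ : ψ.ker = Subgroup.normalClosure (Rel : Set (FreeGroup (Fin n))) := by
    ext x
    rw [MonoidHom.mem_ker, hψ, MonoidHom.comp_apply, MulEquiv.coe_toMonoidHom,
      map_eq_one_iff _ e.symm.injective, QuotientGroup.mk'_apply, QuotientGroup.eq_one_iff]
  -- choose lifts
  set α : FreeGroup (Fin n) →* FreeGroup (Fin k) :=
    FreeGroup.lift (fun i => (hφsurj (ψ (FreeGroup.of i))).choose) with hα
  have hφα : ∀ x, φ (α x) = ψ x := by
    intro x
    have : φ.comp α = ψ := by
      apply FreeGroup.ext_hom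
      intro i
      simp [hα]
      exact (hφsurj (ψ (FreeGroup.of i))).choose_spec
    rw [← this]; rfl
  set β : FreeGroup (Fin k) →* FreeGroup (Fin n) :=
    FreeGroup.lift (fun i => (hψsurj (φ (FreeGroup.of i))).choose) with hβ
  have hψβ : ∀ x, ψ (β x) = φ x := by
    intro x
    have : ψ.comp β = φ := by
      apply FreeGroup.ext_hom
      intro i
      simp [hβ]
      exact (hψsurj (φ (FreeGroup.of i))).choose_spec
    rw [← this]; rfl
  -- the finite set of relators for φ
  set S : Finset (FreeGroup (Fin k)) :=
    Rel.image α ∪ Finset.univ.image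
      (fun i : Fin k => (FreeGroup.of i)⁻¹ * α (β (FreeGroup.of i))) with hS
  set N : Subgroup (FreeGroup (Fin k)) :=
    Subgroup.normalClosure (S : Set (FreeGroup (Fin k))) with hN
  have hSker : (S : Set (FreeGroup (Fin k))) ⊆ φ.ker := by
    intro x hx
    simp only [hS, Finset.coe_union, Set.mem_union, Finset.coe_image, Set.mem_image,
      Finset.mem_coe, Finset.coe_univ, Set.image_univ, Set.mem_range] at hx
    rcases hx with ⟨r, hr, rfl⟩ | ⟨i, rfl⟩
    · have : r ∈ ψ.ker := by
        rw [hker_ψ]; exact Subgroup.subset_normalClosure hr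
      simp [MonoidHom.mem_ker] at this ⊢
      rw [hφα]; exact this
    · simp [MonoidHom.mem_ker, hφα, hψβ]
  have hNker : N ≤ φ.ker := Subgroup.normalClosure_le_normal hSker
  have hkerN : φ.ker ≤ N := by
    intro w hw
    have hβw : β w ∈ ψ.ker := by
      simp [MonoidHom.mem_ker] at hw ⊢
      rw [hψβ]; exact hw
    have hαβw : α (β w) ∈ N := by
      have hrel : Subgroup.normalClosure (Rel : Set (FreeGroup (Fin n))) ≤ N.comap α := by
        apply Subgroup.normalClosure_le_normal
        · intro r hr
          apply Subgroup.subset_normalClosure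
          simp [hS]
          exact Or.inl ⟨r, hr, rfl⟩
      rw [hker_ψ] at hβw
      exact hrel hβw
    -- q ∘ α ∘ β = q
    have hq : ∀ x, QuotientGroup.mk' N (α (β x)) = QuotientGroup.mk' N x := by
      intro x
      have : (QuotientGroup.mk' N).comp (α.comp β) = QuotientGroup.mk' N := by
        apply FreeGroup.ext_hom
        intro i
        simp only [MonoidHom.comp_apply]
        rw [QuotientGroup.mk'_eq_mk']
        refine ⟨((FreeGroup.of i)⁻¹ * α (β (FreeGroup.of i)))⁻¹, ?_, by group⟩
        apply Subgroup.inv_mem _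
        apply Subgroup.subset_normalClosure
        simp [hS]
      calc QuotientGroup.mk' N (α (β x)) = ((QuotientGroup.mk' N).comp (α.comp β)) x := rfl
        _ = QuotientGroup.mk' N x := by rw [this]
    have : QuotientGroup.mk' N w = 1 := by
      rw [← hq w]
      simpa [QuotientGroup.mk'_eq_mk', MonoidHom.mem_ker] using
        (QuotientGroup.eq_one_iff _).2 hαβw
    exact (QuotientGroup.eq_one_iff _).1 this
  have hkereq : φ.ker = N := le_antisymm hkerN hNker
  -- choose R and s
  set R : ℕ := S.sup (fun r => (FreeGroup.toWord r).length) with hRdef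
  obtain ⟨s, hsgen, hs⟩ := hR R
  have hssurj : Function.Surjective (FreeGroup.lift s) := by
    rw [← MonoidHom.range_eq_top, FreeGroup.range_lift_eq_closure, hsgen]
  have hSs : (S : Set (FreeGroup (Fin k))) ⊆ (FreeGroup.lift s).ker := by
    intro x hx
    have hlen : (FreeGroup.toWord x).length ≤ R := Finset.le_sup (f := fun r => (FreeGroup.toWord r).length) (Finset.mem_coe.mp hx)
    have := hs x hlen
    exact MonoidHom.mem_ker.mpr (this.2 (by simpa using hSker hx))
  have hle : φ.ker ≤ (FreeGroup.lift s).ker := by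
    rw [hkereq]
    exact Subgroup.normalClosure_le_normal hSs
  let E := QuotientGroup.quotientKerEquivOfSurjective φ hφsurj
  refine ⟨(QuotientGroup.lift φ.ker (FreeGroup.lift s) hle).comp E.symm.toMonoidHom, ?_⟩
  intro g
  obtain ⟨x, rfl⟩ := hssurj g
  refine ⟨φ x, ?_⟩
  have hE' : E (QuotientGroup.mk x) = φ x := QuotientGroup.kerLift_mk φ x
  have hE : E.symm (φ x) = QuotientGroup.mk x := by
    rw [← hE', MulEquiv.symm_apply_apply]
  simp [hE]
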